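/- arXiv:0706.0578 — 4 statements merged into one kernel-verified Lean document; each statement's English description precedes it below -/
import Mathlib

section
/- Let G be a finite simple graph with vertex set V = {1,…,n}, edge set E, and stability number α(G), let r ≥ 1, and let A, (Q_i), (Q_{ij}) be a reduced Nullstellensatz certificate 1 = A·(−(α(G)+r) + Σ_{i=1}^n x_i) + Σ_{i∈V} Q_i·(x_i² − x_i) + Σ_{{i,j}∈E} Q_{ij}·x_i·x_j (every monomial of A is square-free with support a stable set of G). Then for every stable set S of G, the monomial ∏_{v∈S} x_v appears in A with a non-zero coefficient; in particular, A has at least as many monomials with non-zero coefficients as G has stable sets. -/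
open Finset MvPolynomial

/-- The edge set of `G`, as ordered pairs `(i, j)` with `i < j`. -/
def edgePairs {n : ℕ} (G : SimpleGraph (Fin n)) [DecidableRel G.Adj] :
    Finset (Fin n × Fin n) :=
  Finset.univ.filter fun p => p.1 < p.2 ∧ G.Adj p.1 p.2

/-- A finset of vertices is stable (independent) if no two of its members are adjacent. -/
def IsStableSet {n : ℕ} (G : SimpleGraph (Fin n)) (S : Finset (Fin n)) : Prop :=
  ∀ i ∈ S, ∀ j ∈ S, ¬ G.Adj i j

/-- The stability number `α(G)`: the maximum size of a stable set of `G`. -/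
def stabilityNumber {n : ℕ} (G : SimpleGraph (Fin n)) [DecidableRel G.Adj] : ℕ :=
  (Finset.univ.powerset.filter fun S => ∀ i ∈ S, ∀ j ∈ S, ¬ G.Adj i j).sup Finset.card

/-- The Nullstellensatz certificate identity
`1 = A(−(α(G)+r) + Σ x_i) + Σ_i Q_i (x_i² − x_i) + Σ_{{i,j}∈E} Q_{ij} x_i x_j`
for the non-existence of a stable set of size `α(G) + r`. -/
def IsStableCert {n : ℕ} (G : SimpleGraph (Fin n)) [DecidableRel G.Adj] (r : ℕ)
    (A : MvPolynomial (Fin n) ℂ) (Q : Fin n → MvPolynomial (Fin n) ℂ)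
    (Qe : Fin n × Fin n → MvPolynomial (Fin n) ℂ) : Prop :=
  (1 : MvPolynomial (Fin n) ℂ) =
    A * ((∑ i : Fin n, X i) - C ((stabilityNumber G + r : ℕ) : ℂ)) +
    (∑ i : Fin n, Q i * (X i ^ 2 - X i)) +
    ∑ p ∈ edgePairs G, Qe p * (X p.1 * X p.2)

/-- The degree of a certificate: `max{deg A, deg Q_i, deg Q_{ij}}` (total degrees). -/
def stableCertDeg {n : ℕ} (G : SimpleGraph (Fin n)) [DecidableRel G.Adj]
    (A : MvPolynomial (Fin n) ℂ) (Q : Fin n → MvPolynomial (Fin n) ℂ)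
    (Qe : Fin n × Fin n → MvPolynomial (Fin n) ℂ) : ℕ :=
  max A.totalDegree
    (max (Finset.univ.sup fun i => (Q i).totalDegree)
      ((edgePairs G).sup fun p => (Qe p).totalDegree))

/-- A certificate is reduced when every monomial of `A` is square-free and its support
is a stable set of `G`. -/
def IsReducedCoeff {n : ℕ} (G : SimpleGraph (Fin n)) (A : MvPolynomial (Fin n) ℂ) : Prop :=
  ∀ m ∈ A.support, (∀ i : Fin n, m i ≤ 1) ∧ IsStableSet G m.support

/-- The square-free exponent vector `∏_{v ∈ S} x_v` associated with a finset `S`. -/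
noncomputable def expOf {n : ℕ} (S : Finset (Fin n)) : Fin n →₀ ℕ :=
  ∑ v ∈ S, Finsupp.single v 1


private lemma binom_aux : ∀ (s : ℕ) (x : ℂ), (∀ j : ℕ, j ≤ s → (j : ℂ) + x ≠ 0) →
    (∑ k ∈ Finset.range (s + 1), (-1 : ℂ) ^ k * (s.choose k : ℂ) * ((k : ℂ) + x)⁻¹) *
      ∏ j ∈ Finset.range (s + 1), ((j : ℂ) + x) = (s.factorial : ℂ) := by
  intro s
  induction s with
  | zero =>
      intro x hx
      have h0 : x ≠ 0 := by simpa using hx 0 le_rfl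
      simp [inv_mul_cancel₀, h0]
  | succ s ih =>
      intro x hx
      have hx' : ∀ j : ℕ, j ≤ s → (j : ℂ) + (x + 1) ≠ 0 := by
        intro j hj
        have := hx (j + 1) (by omega)
        push_cast at this ⊢
        ring_nf
        ring_nf at this
        convert this using 2 
      have hx0 : ∀ j : ℕ, j ≤ s → (j : ℂ) + x ≠ 0 := fun j hj => hx j (by omega)
      -- split of the sum
      have hsplit :
          (∑ k ∈ Finset.range (s + 2), (-1 : ℂ) ^ k * ((s+1).choose k : ℂ) * ((k : ℂ) + x)⁻¹)
            = (∑ k ∈ Finset.range (s + 1), (-1 : ℂ) ^ k * (s.choose k : ℂ) * ((k : ℂ) + x)⁻¹)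
              - ∑ k ∈ Finset.range (s + 1), (-1 : ℂ) ^ k * (s.choose k : ℂ) * ((k : ℂ) + (x+1))⁻¹ := by
        rw [Finset.sum_range_succ' (fun k => (-1 : ℂ) ^ k * ((s+1).choose k : ℂ) * ((k : ℂ) + x)⁻¹)]
        have e1 : ∀ i ∈ Finset.range (s + 1),
            (-1 : ℂ) ^ (i+1) * ((s+1).choose (i+1) : ℂ) * (((i+1 : ℕ) : ℂ) + x)⁻¹
              = (-1 : ℂ) ^ (i+1) * (s.choose (i+1) : ℂ) * (((i+1:ℕ) : ℂ) + x)⁻¹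
                + (- ((-1 : ℂ) ^ i * (s.choose i : ℂ) * ((i : ℂ) + (x+1))⁻¹)) := by
          intro i _
          rw [Nat.choose_succ_succ]
          push_cast
          ring
        rw [Finset.sum_congr rfl e1, Finset.sum_add_distrib]
        have e2 : (∑ i ∈ Finset.range (s+1),
            (-1 : ℂ) ^ (i+1) * (s.choose (i+1) : ℂ) * (((i+1:ℕ) : ℂ) + x)⁻¹)
              + (-1:ℂ)^0 * ((s+1).choose 0 : ℂ) * (((0:ℕ):ℂ) + x)⁻¹
            = ∑ k ∈ Finset.range (s + 2), (-1 : ℂ) ^ k * (s.choose k : ℂ) * ((k : ℂ) + x)⁻¹ := by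
          rw [Finset.sum_range_succ' (fun k => (-1 : ℂ) ^ k * (s.choose k : ℂ) * ((k : ℂ) + x)⁻¹)]
          norm_num
        have e3 : (∑ k ∈ Finset.range (s + 2), (-1 : ℂ) ^ k * (s.choose k : ℂ) * ((k : ℂ) + x)⁻¹)
            = ∑ k ∈ Finset.range (s + 1), (-1 : ℂ) ^ k * (s.choose k : ℂ) * ((k : ℂ) + x)⁻¹ := by
          rw [Finset.sum_range_succ, Nat.choose_succ_self]
          norm_num
        have e4 : (∑ i ∈ Finset.range (s+1), (- ((-1 : ℂ) ^ i * (s.choose i : ℂ) * ((i : ℂ) + (x+1))⁻¹)))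
            = - ∑ i ∈ Finset.range (s+1), ((-1 : ℂ) ^ i * (s.choose i : ℂ) * ((i : ℂ) + (x+1))⁻¹) := by
          simp
        rw [e4]
        linear_combination e2 + e3
      rw [hsplit, sub_mul]
      have hP1 : (∏ j ∈ Finset.range (s + 2), ((j : ℂ) + x))
          = (∏ j ∈ Finset.range (s + 1), ((j : ℂ) + x)) * (((s+1 : ℕ) : ℂ) + x) := by
        rw [Finset.prod_range_succ]
      have hP2 : (∏ j ∈ Finset.range (s + 2), ((j : ℂ) + x))
          = (∏ j ∈ Finset.range (s + 1), ((j : ℂ) + (x+1))) * x := by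
        have e5 : ∀ j ∈ Finset.range (s+1), (((j+1:ℕ)) : ℂ) + x = (j : ℂ) + (x+1) := by
          intro j _ ; push_cast ; ring
        rw [Finset.prod_range_succ' (fun j => ((j : ℂ) + x)), Finset.prod_congr rfl e5]
        push_cast
        ring
      calc (∑ k ∈ Finset.range (s + 1), (-1 : ℂ) ^ k * (s.choose k : ℂ) * ((k : ℂ) + x)⁻¹) *
              ∏ j ∈ Finset.range (s + 2), ((j : ℂ) + x)
            - (∑ k ∈ Finset.range (s + 1), (-1 : ℂ) ^ k * (s.choose k : ℂ) * ((k : ℂ) + (x+1))⁻¹) *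
              ∏ j ∈ Finset.range (s + 2), ((j : ℂ) + x)
          = ((∑ k ∈ Finset.range (s + 1), (-1 : ℂ) ^ k * (s.choose k : ℂ) * ((k : ℂ) + x)⁻¹) *
              ∏ j ∈ Finset.range (s + 1), ((j : ℂ) + x)) * (((s+1 : ℕ) : ℂ) + x)
            - ((∑ k ∈ Finset.range (s + 1), (-1 : ℂ) ^ k * (s.choose k : ℂ) * ((k : ℂ) + (x+1))⁻¹) *
              ∏ j ∈ Finset.range (s + 1), ((j : ℂ) + (x+1))) * x := by
            nth_rewrite 2 [hP2] ; rw [hP1] ; ring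
        _ = (s.factorial : ℂ) * (((s+1 : ℕ) : ℂ) + x) - (s.factorial : ℂ) * x := by
            rw [ih x hx0, ih (x+1) hx']
        _ = ((s+1).factorial : ℂ) := by
            rw [Nat.factorial_succ] ; push_cast ; ring

private lemma expOf_apply {n : ℕ} (S : Finset (Fin n)) (i : Fin n) :
    expOf S i = if i ∈ S then 1 else 0 := by
  classical
  rw [expOf, Finset.sum_apply']
  simp [Finsupp.single_apply]

private lemma expOf_support {n : ℕ} (S : Finset (Fin n)) : (expOf S).support = S := by
  ext i
  rw [Finsupp.mem_support_iff, expOf_apply]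
  by_cases h : i ∈ S <;> simp [h]

private lemma eq_expOf_of_squarefree {n : ℕ} (m : Fin n →₀ ℕ) (h1 : ∀ i, m i ≤ 1) :
    m = expOf m.support := by
  ext i
  rw [expOf_apply]
  by_cases h : i ∈ m.support
  · rw [if_pos h]
    have h2 := Finsupp.mem_support_iff.1 h
    have h3 := h1 i
    omega
  · rw [if_neg h]
    exact Finsupp.notMem_support_iff.1 h

private lemma inner_mobius {n : ℕ} (S D : Finset (Fin n)) (hD : D ⊆ S) :
    (∑ T ∈ S.powerset, (if D ⊆ T then ((-1 : ℂ)) ^ (S.card - T.card) else 0))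
      = if D = S then 1 else 0 := by
  classical
  rw [← Finset.sum_filter]
  have hbij : (∑ T ∈ S.powerset.filter (fun T => D ⊆ T), ((-1 : ℂ)) ^ (S.card - T.card))
      = ∑ U ∈ (S \ D).powerset, ((-1 : ℂ)) ^ ((S \ D).card - U.card) := by
    refine Finset.sum_bij' (fun T _ => T \ D) (fun U _ => U ∪ D) ?_ ?_ ?_ ?_ ?_
    · intro T hT
      rw [Finset.mem_filter, Finset.mem_powerset] at hT
      exact Finset.mem_powerset.2 (Finset.sdiff_subset_sdiff hT.1 Finset.Subset.rfl)
    · intro U hU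
      rw [Finset.mem_powerset] at hU
      rw [Finset.mem_filter, Finset.mem_powerset]
      refine ⟨Finset.union_subset (hU.trans Finset.sdiff_subset) hD, Finset.subset_union_right⟩
    · intro T hT
      rw [Finset.mem_filter] at hT
      exact Finset.sdiff_union_of_subset hT.2
    · intro U hU
      rw [Finset.mem_powerset] at hU
      exact Finset.union_sdiff_cancel_right
        (Finset.disjoint_of_subset_left hU Finset.sdiff_disjoint)
    · intro T hT
      rw [Finset.mem_filter, Finset.mem_powerset] at hT
      congr 1
      have h1 : D.card ≤ T.card := Finset.card_le_card hT.2
      have h2 : T.card ≤ S.card := Finset.card_le_card hT.1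
      rw [Finset.card_sdiff_of_subset hD, Finset.card_sdiff_of_subset hT.2]
      omega
  rw [hbij]
  have hsign : ∀ U ∈ (S \ D).powerset,
      ((-1 : ℂ)) ^ ((S \ D).card - U.card)
        = ((-1 : ℂ)) ^ ((S \ D).card) * ((-1 : ℂ)) ^ (U.card) := by
    intro U hU
    have hle : U.card ≤ (S \ D).card :=
      Finset.card_le_card (Finset.mem_powerset.1 hU)
    have h2 : (S \ D).card - U.card + 2 * U.card = (S \ D).card + U.card := by omega
    calc ((-1 : ℂ)) ^ ((S \ D).card - U.card)
        = ((-1 : ℂ)) ^ ((S \ D).card - U.card) * ((-1 : ℂ)) ^ (2 * U.card) := by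
          rw [pow_mul] ; norm_num
      _ = ((-1 : ℂ)) ^ ((S \ D).card + U.card) := by rw [← pow_add, h2]
      _ = _ := pow_add _ _ _
  rw [Finset.sum_congr rfl hsign, ← Finset.mul_sum]
  have hz : (∑ U ∈ (S \ D).powerset, ((-1 : ℂ)) ^ U.card)
      = if S \ D = ∅ then 1 else 0 := by
    have := @Finset.sum_powerset_neg_one_pow_card (Fin n) _ (S \ D)
    have hc : ((∑ U ∈ (S \ D).powerset, ((-1 : ℤ)) ^ U.card : ℤ) : ℂ)
        = ∑ U ∈ (S \ D).powerset, ((-1 : ℂ)) ^ U.card := by push_cast ; rfl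
    rw [← hc, this]
    split <;> simp
  rw [hz]
  by_cases hDS : D = S
  · subst hDS
    simp
  · have : S \ D ≠ ∅ := by
      intro h
      exact hDS (Finset.Subset.antisymm hD (Finset.sdiff_eq_empty_iff_subset.1 h))
    rw [if_neg this, if_neg hDS, mul_zero]

private noncomputable def chi {n : ℕ} (T : Finset (Fin n)) : Fin n → ℂ :=
  fun i => if i ∈ T then 1 else 0

private lemma eval_chi_support {n : ℕ} (A : MvPolynomial (Fin n) ℂ) (T : Finset (Fin n)) :
    eval (chi T) A = ∑ m ∈ A.support, (if m.support ⊆ T then coeff m A else 0) := by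
  classical
  rw [eval_eq']
  refine Finset.sum_congr rfl fun m _ => ?_
  by_cases h : m.support ⊆ T
  · rw [if_pos h]
    have : (∏ i, chi T i ^ m i) = 1 := by
      refine Finset.prod_eq_one fun i _ => ?_
      by_cases hi : m i = 0
      · rw [hi, pow_zero]
      · have : i ∈ T := h (Finsupp.mem_support_iff.2 hi)
        simp [chi, this]
    rw [this, mul_one]
  · rw [if_neg h]
    obtain ⟨i, hi, hiT⟩ := Finset.not_subset.1 h
    have : (∏ j, chi T j ^ m j) = 0 := by
      refine Finset.prod_eq_zero (Finset.mem_univ i) ?_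
      have hmi : m i ≠ 0 := Finsupp.mem_support_iff.1 hi
      simp [chi, hiT, zero_pow hmi]
    rw [this, mul_zero]

private lemma sign_split (s k : ℕ) (hk : k ≤ s) :
    ((-1 : ℂ)) ^ (s - k) = (-1) ^ s * (-1) ^ k := by
  have h2 : s - k + 2 * k = s + k := by omega
  calc ((-1 : ℂ)) ^ (s - k) = (-1) ^ (s - k) * (-1) ^ (2 * k) := by rw [pow_mul] ; norm_num
    _ = (-1) ^ (s + k) := by rw [← pow_add, h2]
    _ = _ := pow_add _ _ _

/-- In a reduced Nullstellensatz certificate for the non-existence of a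
stable set of size `α(G) + r`, the monomial `∏_{v ∈ S} x_v` appears in `A` with non-zero
coefficient for every stable set `S` of `G`; in particular `A` has at least as many
monomials with non-zero coefficients as `G` has stable sets. -/
theorem reduced_certificate_contains_all_stable_sets (n : ℕ) (G : SimpleGraph (Fin n))
    [DecidableRel G.Adj] (r : ℕ) (hr : 1 ≤ r)
    (A : MvPolynomial (Fin n) ℂ) (Q : Fin n → MvPolynomial (Fin n) ℂ)
    (Qe : Fin n × Fin n → MvPolynomial (Fin n) ℂ)
    (hcert : IsStableCert G r A Q Qe) (hred : IsReducedCoeff G A) :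
    (∀ S : Finset (Fin n), IsStableSet G S → MvPolynomial.coeff (expOf S) A ≠ 0) ∧
    (Finset.univ.powerset.filter fun S : Finset (Fin n) =>
        ∀ i ∈ S, ∀ j ∈ S, ¬ G.Adj i j).card ≤ A.support.card := by
  classical
  set a : ℕ := stabilityNumber G + r with ha
  have hstabcard : ∀ S : Finset (Fin n), IsStableSet G S → S.card ≤ stabilityNumber G := by
    intro S hS
    exact Finset.le_sup (f := Finset.card)
      (Finset.mem_filter.2 ⟨Finset.mem_powerset.2 (Finset.subset_univ S), hS⟩)
  have hevalT : ∀ T : Finset (Fin n), IsStableSet G T →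
      eval (chi T) A = ((T.card : ℂ) + (-(a : ℂ)))⁻¹ := by
    intro T hT
    have h1 := congrArg (eval (chi T)) hcert
    simp only [map_add, map_mul, map_sub, map_sum, map_one, map_pow, eval_C, eval_X] at h1
    have hsum : (∑ i : Fin n, chi T i) = (T.card : ℂ) := by
      unfold chi
      rw [Finset.sum_ite_mem]
      simp
    have hQ : (∑ i : Fin n, eval (chi T) (Q i) * (chi T i ^ 2 - chi T i)) = 0 := by
      refine Finset.sum_eq_zero fun i _ => ?_
      have : chi T i ^ 2 - chi T i = 0 := by
        unfold chi ; by_cases h : i ∈ T <;> simp [h]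
      rw [this, mul_zero]
    have hE : (∑ p ∈ edgePairs G, eval (chi T) (Qe p) * (chi T p.1 * chi T p.2)) = 0 := by
      refine Finset.sum_eq_zero fun p hp => ?_
      rw [edgePairs, Finset.mem_filter] at hp
      have hadj := hp.2.2
      have : chi T p.1 * chi T p.2 = 0 := by
        unfold chi
        by_cases h1 : p.1 ∈ T
        · have h2 : p.2 ∉ T := fun h2 => hT p.1 h1 p.2 h2 hadj
          simp [h2]
        · simp [h1]
      rw [this, mul_zero]
    rw [hsum, hQ, hE, add_zero, add_zero] at h1
    have hlt : T.card < a := by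
      have := hstabcard T hT
      omega
    have hne : (T.card : ℂ) - (a : ℂ) ≠ 0 := by
      rw [sub_ne_zero]
      exact_mod_cast Nat.ne_of_lt hlt
    have h2 : ((T.card : ℂ) - (a : ℂ)) * eval (chi T) A = 1 := by
      rw [mul_comm] ; exact h1.symm
    rw [← sub_eq_add_neg]
    exact eq_inv_of_mul_eq_one_left (by rw [mul_comm] ; exact h2.symm ▸ h2)
  -- Möbius inversion
  have hmob : ∀ S : Finset (Fin n), IsStableSet G S →
      MvPolynomial.coeff (expOf S) A
        = ∑ T ∈ S.powerset, (-1 : ℂ) ^ (S.card - T.card) * eval (chi T) A := by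
    intro S hS
    have step1 : ∀ T ∈ S.powerset,
        (-1 : ℂ) ^ (S.card - T.card) * eval (chi T) A
          = ∑ m ∈ A.support,
              (if m.support ⊆ T then (-1 : ℂ) ^ (S.card - T.card) * coeff m A else 0) := by
      intro T _
      rw [eval_chi_support, Finset.mul_sum]
      refine Finset.sum_congr rfl fun m _ => ?_
      split <;> simp
    rw [Finset.sum_congr rfl step1, Finset.sum_comm]
    have step2 : ∀ m ∈ A.support,
        (∑ T ∈ S.powerset,
            (if m.support ⊆ T then (-1 : ℂ) ^ (S.card - T.card) * coeff m A else 0))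
          = coeff m A *
            ∑ T ∈ S.powerset, (if m.support ⊆ T then (-1 : ℂ) ^ (S.card - T.card) else 0) := by
      intro m _
      rw [Finset.mul_sum]
      refine Finset.sum_congr rfl fun T _ => ?_
      split <;> ring
    rw [Finset.sum_congr rfl step2]
    have key : ∀ m ∈ A.support,
        coeff m A *
            (∑ T ∈ S.powerset, (if m.support ⊆ T then (-1 : ℂ) ^ (S.card - T.card) else 0))
          = (if m.support = S then coeff m A else 0) := by
      intro m _
      by_cases hms : m.support ⊆ S
      · rw [inner_mobius S m.support hms]
        split <;> ring
      · have hz : (∑ T ∈ S.powerset,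
            (if m.support ⊆ T then (-1 : ℂ) ^ (S.card - T.card) else 0)) = 0 := by
          refine Finset.sum_eq_zero fun T hT => ?_
          exact if_neg fun h => hms (h.trans (Finset.mem_powerset.1 hT))
        rw [hz, mul_zero, if_neg (fun h => hms (by rw [h]))]
    rw [Finset.sum_congr rfl key]
    by_cases hmem : expOf S ∈ A.support
    · rw [Finset.sum_eq_single_of_mem (expOf S) hmem, if_pos (expOf_support S)]
      intro m hm hne
      refine if_neg fun hms => hne ?_
      rw [eq_expOf_of_squarefree m (hred m hm).1, hms]
    · rw [Finset.sum_eq_zero]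
      · exact MvPolynomial.notMem_support_iff.1 hmem
      · intro m hm
        refine if_neg fun hms => hmem ?_
        rw [← hms, ← eq_expOf_of_squarefree m (hred m hm).1]
        exact hm
  -- the coefficient is non-zero
  have main : ∀ S : Finset (Fin n), IsStableSet G S →
      MvPolynomial.coeff (expOf S) A ≠ 0 := by
    intro S hS
    set x : ℂ := -(a : ℂ) with hx
    have hsub : ∀ T : Finset (Fin n), T ⊆ S → IsStableSet G T :=
      fun T hTS i hi j hj => hS i (hTS hi) j (hTS hj)
    have h1 : MvPolynomial.coeff (expOf S) A
        = ∑ T ∈ S.powerset, (-1 : ℂ) ^ (S.card - T.card) * ((T.card : ℂ) + x)⁻¹ := by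
      rw [hmob S hS]
      refine Finset.sum_congr rfl fun T hT => ?_
      rw [hevalT T (hsub T (Finset.mem_powerset.1 hT))]
    have h2 : MvPolynomial.coeff (expOf S) A
        = ∑ k ∈ Finset.range (S.card + 1),
            (S.card.choose k) • ((-1 : ℂ) ^ (S.card - k) * ((k : ℂ) + x)⁻¹) := by
      rw [h1]
      exact Finset.sum_powerset_apply_card
        (fun k => (-1 : ℂ) ^ (S.card - k) * ((k : ℂ) + x)⁻¹)
    have h3 : MvPolynomial.coeff (expOf S) A
        = (-1 : ℂ) ^ S.card *
            ∑ k ∈ Finset.range (S.card + 1),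
              (-1 : ℂ) ^ k * (S.card.choose k : ℂ) * ((k : ℂ) + x)⁻¹ := by
      rw [h2, Finset.mul_sum]
      refine Finset.sum_congr rfl fun k hk => ?_
      have hk' : k ≤ S.card := by
        have := Finset.mem_range.1 hk ; omega
      rw [nsmul_eq_mul, sign_split S.card k hk']
      ring
    have hnz : ∀ j : ℕ, j ≤ S.card → (j : ℂ) + x ≠ 0 := by
      intro j hj
      have hja : j < a := by
        have := hstabcard S hS ; omega
      rw [hx, ← sub_eq_add_neg, sub_ne_zero]
      exact_mod_cast Nat.ne_of_lt hja
    have hbin := binom_aux S.card x hnz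
    intro hzero
    rw [h3] at hzero
    have hF : (∑ k ∈ Finset.range (S.card + 1),
        (-1 : ℂ) ^ k * (S.card.choose k : ℂ) * ((k : ℂ) + x)⁻¹) = 0 := by
      rcases mul_eq_zero.1 hzero with h | h
      · exact absurd h (pow_ne_zero _ (by norm_num))
      · exact h
    rw [hF, zero_mul] at hbin
    exact (Nat.cast_ne_zero.2 (Nat.factorial_ne_zero S.card)) hbin.symm
  refine ⟨main, ?_⟩
  refine Finset.card_le_card_of_injOn expOf ?_ ?_
  · intro S hS
    have hSst : IsStableSet G S := (Finset.mem_filter.1 hS).2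
    exact MvPolynomial.mem_support_iff.2 (main S hSst)
  · intro S _ T _ h
    have := congrArg Finsupp.support h
    rwa [expOf_support, expOf_support] at this
end

section
/- Let G be a finite simple graph with vertex set V = {1,…,n} and edge set E. Then every Nullstellensatz certificate for non-3-colorability of G, i.e., every family of polynomials (P_i)_{i∈V}, (P_{ij})_{{i,j}∈E} in ℂ[x_1,…,x_n] satisfying the identity 1 = Σ_{i∈V} P_i·(x_i³ − 1) + Σ_{{i,j}∈E} P_{ij}·(x_i² + x_i·x_j + x_j²), has degree at least four: max over all i and {i,j} of the total degrees of P_i and P_{ij} is ≥ 4. -/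
open Finset MvPolynomial

/-- A Nullstellensatz certificate for non-3-colorability of `G`: polynomials
`(P_i)_{i∈V}` and `(P_{ij})_{{i,j}∈E}` with
`1 = Σ_i P_i (x_i³ − 1) + Σ_{{i,j}∈E} P_{ij} (x_i² + x_i x_j + x_j²)`. -/
def IsColorCert {n : ℕ} (G : SimpleGraph (Fin n)) [DecidableRel G.Adj]
    (P : Fin n → MvPolynomial (Fin n) ℂ)
    (Pe : Fin n × Fin n → MvPolynomial (Fin n) ℂ) : Prop :=
  (1 : MvPolynomial (Fin n) ℂ) =
    (∑ i : Fin n, P i * (X i ^ 3 - 1)) +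
    ∑ p ∈ edgePairs G, Pe p * (X p.1 ^ 2 + X p.1 * X p.2 + X p.2 ^ 2)

/-- The degree of a non-3-colorability certificate: the maximum of the total degrees of
the coefficient polynomials. -/
def colorCertDeg {n : ℕ} (G : SimpleGraph (Fin n)) [DecidableRel G.Adj]
    (P : Fin n → MvPolynomial (Fin n) ℂ)
    (Pe : Fin n × Fin n → MvPolynomial (Fin n) ℂ) : ℕ :=
  max (Finset.univ.sup fun i => (P i).totalDegree)
    ((edgePairs G).sup fun p => (Pe p).totalDegree)

section Helpers

variable {n : ℕ}

/-- number of coordinates whose exponent is ≡ r (mod 3) -/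
def cnt3 (r : ℕ) (μ : Fin n →₀ ℕ) : ℕ :=
  (Finset.univ.filter fun k => μ k % 3 = r).card

noncomputable def hamW (s1 s2 : ℕ) : ℂ :=
  if s1 = 0 ∧ s2 = 0 then 2
  else if s1 = 1 ∧ s2 = 1 then -1
  else if s1 = 3 ∧ s2 = 0 then 2
  else 0

noncomputable def lamW (μ : Fin n →₀ ℕ) : ℂ := hamW (cnt3 1 μ) (cnt3 2 μ)

noncomputable def LamW (f : MvPolynomial (Fin n) ℂ) : ℂ :=
  ∑ μ ∈ f.support, lamW μ * f.coeff μ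

lemma LamW_eq_sum {f : MvPolynomial (Fin n) ℂ} {s : Finset (Fin n →₀ ℕ)}
    (hs : f.support ⊆ s) : LamW f = ∑ μ ∈ s, lamW μ * f.coeff μ :=
  Finset.sum_subset hs (by
    intro x _ hx
    rw [MvPolynomial.notMem_support_iff.1 hx, mul_zero])

lemma LamW_add (f g : MvPolynomial (Fin n) ℂ) : LamW (f + g) = LamW f + LamW g := by
  classical
  rw [LamW_eq_sum (f := f + g) (s := f.support ∪ g.support) MvPolynomial.support_add,
    LamW_eq_sum (f := f) (s := f.support ∪ g.support) Finset.subset_union_left,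
    LamW_eq_sum (f := g) (s := f.support ∪ g.support) Finset.subset_union_right,
    ← Finset.sum_add_distrib]
  exact Finset.sum_congr rfl fun μ _ => by rw [MvPolynomial.coeff_add]; ring

lemma LamW_neg (f : MvPolynomial (Fin n) ℂ) : LamW (-f) = - LamW f := by
  simp [LamW, MvPolynomial.support_neg, mul_neg, Finset.sum_neg_distrib]

lemma LamW_sum {α : Type*} (s : Finset α) (f : α → MvPolynomial (Fin n) ℂ) :
    LamW (∑ a ∈ s, f a) = ∑ a ∈ s, LamW (f a) := by
  classical
  induction s using Finset.cons_induction with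
  | empty => simp [LamW]
  | cons a s ha ih => rw [Finset.sum_cons, Finset.sum_cons, LamW_add, ih]

lemma LamW_monomial (μ : Fin n →₀ ℕ) (c : ℂ) : LamW (monomial μ c) = lamW μ * c := by
  classical
  rcases eq_or_ne c 0 with rfl | hc
  · simp [LamW]
  · rw [LamW, MvPolynomial.support_monomial, if_neg hc, Finset.sum_singleton,
      MvPolynomial.coeff_monomial, if_pos rfl]

lemma lamW_shift3 (μ : Fin n →₀ ℕ) (i : Fin n) :
    lamW (μ + Finsupp.single i 3) = lamW μ := by
  classical
  have h : ∀ r, cnt3 r (μ + Finsupp.single i 3) = cnt3 r μ := by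
    intro r
    unfold cnt3
    congr 1
    apply Finset.filter_congr
    intro k _
    have hk : (μ + Finsupp.single i 3 : Fin n →₀ ℕ) k = μ k + (if i = k then 3 else 0) := by
      rw [Finsupp.add_apply, Finsupp.single_apply]
    rw [hk]
    split_ifs <;> constructor <;> omega
  unfold lamW
  rw [h 1, h 2]

lemma card_filter_insert' {α : Type*} [DecidableEq α] (t : Finset α) (x : α) (hx : x ∉ t)
    (p : α → Prop) [DecidablePred p] :
    (Finset.filter p (insert x t)).card = (if p x then 1 else 0) + (t.filter p).card := by
  rw [Finset.filter_insert]
  split_ifs with h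
  · rw [Finset.card_insert_of_notMem (fun hmem => hx (Finset.mem_of_mem_filter _ hmem))]
    omega
  · omega

lemma cnt3_split (μ w : Fin n →₀ ℕ) {i j : Fin n} (hij : i ≠ j)
    (hw : ∀ k, k ≠ i → k ≠ j → w k = μ k) (r : ℕ) :
    cnt3 r w = ((((Finset.univ.erase i).erase j).filter fun k => μ k % 3 = r).card
      + (if w i % 3 = r then 1 else 0)) + (if w j % 3 = r then 1 else 0) := by
  classical
  set s := (Finset.univ.erase i).erase j with hs
  have hjs : j ∉ s := by simp [hs]
  have his : i ∉ s := by simp [hs, hij]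
  have hins : insert i (insert j s) = (Finset.univ : Finset (Fin n)) := by
    rw [hs, Finset.insert_erase (by simp [hij.symm] : j ∈ Finset.univ.erase i)]
    exact Finset.insert_erase (Finset.mem_univ i)
  have hiis : i ∉ insert j s := by simp [his, hij]
  have hfilt : s.filter (fun k => w k % 3 = r) = s.filter (fun k => μ k % 3 = r) := by
    apply Finset.filter_congr
    intro k hk
    have hk1 : k ≠ j := (Finset.mem_erase.1 hk).1
    have hk2 : k ≠ i := (Finset.mem_erase.1 (Finset.mem_erase.1 hk).2).1
    rw [hw k hk2 hk1]
  unfold cnt3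
  rw [← hins, card_filter_insert' _ _ hiis, card_filter_insert' _ _ hjs, hfilt]
  omega

lemma lamW_edge (μ : Fin n →₀ ℕ) {i j : Fin n} (hij : i ≠ j)
    (hdeg : ∑ k, μ k ≤ 3) :
    lamW (μ + Finsupp.single i 2) +
      lamW (μ + (Finsupp.single i 1 + Finsupp.single j 1)) +
      lamW (μ + Finsupp.single j 2) = 0 := by
  classical
  set s := (Finset.univ.erase i).erase j with hs
  set u := (s.filter fun k => μ k % 3 = 1).card with hu
  set v := (s.filter fun k => μ k % 3 = 2).card with hv
  -- the degree bound
  have hjs : j ∉ s := by simp [hs]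
  have his : i ∉ s := by simp [hs, hij]
  have hins : insert i (insert j s) = (Finset.univ : Finset (Fin n)) := by
    rw [hs, Finset.insert_erase (by simp [hij.symm] : j ∈ Finset.univ.erase i)]
    exact Finset.insert_erase (Finset.mem_univ i)
  have hiis : i ∉ insert j s := by simp [his, hij]
  have hsum_split : ∑ k, μ k = μ i + (μ j + ∑ k ∈ s, μ k) := by
    rw [← hins, Finset.sum_insert hiis, Finset.sum_insert hjs]
  have hdisj : Disjoint (s.filter fun k => μ k % 3 = 1) (s.filter fun k => μ k % 3 = 2) := by
    apply Finset.disjoint_left.2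
    intro k hk1 hk2
    have h1 := (Finset.mem_filter.1 hk1).2
    have h2 := (Finset.mem_filter.1 hk2).2
    omega
  have hf1 : ∑ k ∈ (s.filter fun k => μ k % 3 = 1), μ k % 3 = u := by
    rw [Finset.sum_congr rfl (fun k hk => (Finset.mem_filter.1 hk).2)]
    simp [hu]
  have hf2 : ∑ k ∈ (s.filter fun k => μ k % 3 = 2), μ k % 3 = 2 * v := by
    rw [Finset.sum_congr rfl (fun k hk => (Finset.mem_filter.1 hk).2)]
    simp [hv, mul_comm]
  have hsub : (s.filter fun k => μ k % 3 = 1) ∪ (s.filter fun k => μ k % 3 = 2) ⊆ s :=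
    Finset.union_subset (Finset.filter_subset _ _) (Finset.filter_subset _ _)
  have hbound1 : u + 2 * v ≤ ∑ k ∈ s, μ k % 3 := by
    calc u + 2 * v
        = ∑ k ∈ ((s.filter fun k => μ k % 3 = 1) ∪ (s.filter fun k => μ k % 3 = 2)), μ k % 3 := by
          rw [Finset.sum_union hdisj, hf1, hf2]
      _ ≤ ∑ k ∈ s, μ k % 3 := Finset.sum_le_sum_of_subset hsub
  have hbound2 : ∑ k ∈ s, μ k % 3 ≤ ∑ k ∈ s, μ k :=
    Finset.sum_le_sum (fun k _ => Nat.mod_le _ _)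
  have key : u + 2 * v + μ i % 3 + μ j % 3 ≤ 3 := by
    have h1 := Nat.mod_le (μ i) 3
    have h2 := Nat.mod_le (μ j) 3
    omega
  -- compute the three lamW values
  have w1i : (μ + Finsupp.single i 2 : Fin n →₀ ℕ) i = μ i + 2 := by simp
  have w1j : (μ + Finsupp.single i 2 : Fin n →₀ ℕ) j = μ j := by
    simp [Finsupp.single_eq_of_ne' hij]
  have w2i : (μ + (Finsupp.single i 1 + Finsupp.single j 1) : Fin n →₀ ℕ) i = μ i + 1 := by
    simp [Finsupp.single_eq_of_ne' hij.symm]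
  have w2j : (μ + (Finsupp.single i 1 + Finsupp.single j 1) : Fin n →₀ ℕ) j = μ j + 1 := by
    simp [Finsupp.single_eq_of_ne' hij]
  have w3i : (μ + Finsupp.single j 2 : Fin n →₀ ℕ) i = μ i := by
    simp [Finsupp.single_eq_of_ne' hij.symm]
  have w3j : (μ + Finsupp.single j 2 : Fin n →₀ ℕ) j = μ j + 2 := by simp
  have hw1 : ∀ k, k ≠ i → k ≠ j → (μ + Finsupp.single i 2 : Fin n →₀ ℕ) k = μ k := by
    intro k hki _; simp [Finsupp.single_eq_of_ne' (Ne.symm hki)]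
  have hw2 : ∀ k, k ≠ i → k ≠ j → (μ + (Finsupp.single i 1 + Finsupp.single j 1) : Fin n →₀ ℕ) k = μ k := by
    intro k hki hkj
    simp [Finsupp.single_eq_of_ne' (Ne.symm hki), Finsupp.single_eq_of_ne' (Ne.symm hkj)]
  have hw3 : ∀ k, k ≠ i → k ≠ j → (μ + Finsupp.single j 2 : Fin n →₀ ℕ) k = μ k := by
    intro k _ hkj; simp [Finsupp.single_eq_of_ne' (Ne.symm hkj)]
  have e1 : lamW (μ + Finsupp.single i 2)
      = hamW ((u + (if (μ i + 2) % 3 = 1 then 1 else 0)) + (if μ j % 3 = 1 then 1 else 0))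
             ((v + (if (μ i + 2) % 3 = 2 then 1 else 0)) + (if μ j % 3 = 2 then 1 else 0)) := by
    unfold lamW
    rw [cnt3_split μ _ hij hw1 1, cnt3_split μ _ hij hw1 2, w1i, w1j, ← hs, ← hu, ← hv]
  have e2 : lamW (μ + (Finsupp.single i 1 + Finsupp.single j 1))
      = hamW ((u + (if (μ i + 1) % 3 = 1 then 1 else 0)) + (if (μ j + 1) % 3 = 1 then 1 else 0))
             ((v + (if (μ i + 1) % 3 = 2 then 1 else 0)) + (if (μ j + 1) % 3 = 2 then 1 else 0)) := by
    unfold lamW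
    rw [cnt3_split μ _ hij hw2 1, cnt3_split μ _ hij hw2 2, w2i, w2j, ← hs, ← hu, ← hv]
  have e3 : lamW (μ + Finsupp.single j 2)
      = hamW ((u + (if μ i % 3 = 1 then 1 else 0)) + (if (μ j + 2) % 3 = 1 then 1 else 0))
             ((v + (if μ i % 3 = 2 then 1 else 0)) + (if (μ j + 2) % 3 = 2 then 1 else 0)) := by
    unfold lamW
    rw [cnt3_split μ _ hij hw3 1, cnt3_split μ _ hij hw3 2, w3i, w3j, ← hs, ← hu, ← hv]
  rw [e1, e2, e3]
  have hmi2 : (μ i + 2) % 3 = (μ i % 3 + 2) % 3 := by omega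
  have hmi1 : (μ i + 1) % 3 = (μ i % 3 + 1) % 3 := by omega
  have hmj2 : (μ j + 2) % 3 = (μ j % 3 + 2) % 3 := by omega
  have hmj1 : (μ j + 1) % 3 = (μ j % 3 + 1) % 3 := by omega
  rw [hmi2, hmi1, hmj2, hmj1]
  rcases (by omega : μ i % 3 = 0 ∨ μ i % 3 = 1 ∨ μ i % 3 = 2) with hi | hi | hi <;>
    rcases (by omega : μ j % 3 = 0 ∨ μ j % 3 = 1 ∨ μ j % 3 = 2) with hj | hj | hj <;>
      rw [hi, hj] at key ⊢
  all_goals (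
    have hu3 : u ≤ 3 := by omega
    have hv1 : v ≤ 1 := by omega
    clear_value u v
    clear hu hv
    interval_cases u <;> interval_cases v <;> first
      | (exfalso; omega)
      | norm_num [hamW])


lemma LamW_mul_cube (p : MvPolynomial (Fin n) ℂ) (i : Fin n) :
    LamW (p * (X i ^ 3 - 1)) = 0 := by
  induction p using MvPolynomial.induction_on' with
  | monomial u a =>
    have hexp : (monomial u a : MvPolynomial (Fin n) ℂ) * (X i ^ 3 - 1)
        = monomial (u + Finsupp.single i 3) a + (- monomial u a) := by
      rw [mul_sub, mul_one, X_pow_eq_monomial, monomial_mul, mul_one, sub_eq_add_neg]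
    rw [hexp, LamW_add, LamW_neg, LamW_monomial, LamW_monomial, lamW_shift3]
    ring
  | add p q hp hq =>
    rw [add_mul, LamW_add, hp, hq, add_zero]

lemma LamW_mul_edge (Q : MvPolynomial (Fin n) ℂ) {i j : Fin n} (hij : i ≠ j)
    (hQ : Q.totalDegree ≤ 3) :
    LamW (Q * (X i ^ 2 + X i * X j + X j ^ 2)) = 0 := by
  classical
  conv_lhs => rw [Q.as_sum, Finset.sum_mul]
  rw [LamW_sum]
  apply Finset.sum_eq_zero
  intro μ hμ
  have hdeg : ∑ k, μ k ≤ 3 := by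
    have h1 : (μ.sum fun _ e => e) ≤ Q.totalDegree := MvPolynomial.le_totalDegree hμ
    have h2 : μ.sum (fun _ e => e) = ∑ k, μ k := Finsupp.sum_fintype _ _ (fun _ => rfl)
    omega
  have hXX : (X i * X j : MvPolynomial (Fin n) ℂ)
      = monomial (Finsupp.single i 1 + Finsupp.single j 1) 1 := by
    rw [← pow_one (X i), ← pow_one (X j), X_pow_eq_monomial, X_pow_eq_monomial,
      monomial_mul, mul_one]
  have hexp : (monomial μ (coeff μ Q)) * (X i ^ 2 + X i * X j + X j ^ 2)
      = monomial (μ + Finsupp.single i 2) (coeff μ Q)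
        + monomial (μ + (Finsupp.single i 1 + Finsupp.single j 1)) (coeff μ Q)
        + monomial (μ + Finsupp.single j 2) (coeff μ Q) := by
    rw [mul_add, mul_add, hXX, X_pow_eq_monomial, X_pow_eq_monomial,
      monomial_mul, monomial_mul, monomial_mul, mul_one]
  rw [hexp, LamW_add, LamW_add, LamW_monomial, LamW_monomial, LamW_monomial,
    ← add_mul, ← add_mul, lamW_edge μ hij hdeg, zero_mul]

lemma LamW_one : LamW (1 : MvPolynomial (Fin n) ℂ) = 2 := by
  classical
  have h1 : (1 : MvPolynomial (Fin n) ℂ) = monomial 0 1 := by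
    rw [MvPolynomial.monomial_zero', MvPolynomial.C_1]
  rw [h1, LamW_monomial, mul_one]
  simp [lamW, hamW, cnt3]

end Helpers

/-- Every Nullstellensatz certificate for non-3-colorability of a graph
has degree at least four. -/
theorem color_certificate_degree_at_least_four (n : ℕ) (G : SimpleGraph (Fin n))
    [DecidableRel G.Adj]
    (P : Fin n → MvPolynomial (Fin n) ℂ)
    (Pe : Fin n × Fin n → MvPolynomial (Fin n) ℂ)
    (hcert : IsColorCert G P Pe) :
    4 ≤ colorCertDeg G P Pe := by
  by_contra hlt
  have h3 : colorCertDeg G P Pe ≤ 3 := by omega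
  rw [colorCertDeg, max_le_iff] at h3
  obtain ⟨h3P, h3E⟩ := h3
  have h0 : LamW ((∑ i : Fin n, P i * (X i ^ 3 - 1)) +
      ∑ p ∈ edgePairs G, Pe p * (X p.1 ^ 2 + X p.1 * X p.2 + X p.2 ^ 2)) = 0 := by
    rw [LamW_add, LamW_sum, LamW_sum]
    rw [Finset.sum_eq_zero (fun i _ => LamW_mul_cube (P i) i),
      Finset.sum_eq_zero (fun p hp => ?_), add_zero]
    exact LamW_mul_edge (Pe p) (ne_of_lt (Finset.mem_filter.1 hp).2.1)
      (le_trans (Finset.le_sup (f := fun p => (Pe p).totalDegree) hp) h3E)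
  rw [← hcert, LamW_one] at h0
  norm_num at h0
end

section
/- Let G and H be finite simple graphs and let f be a graph homomorphism from G to H, i.e., a map from the vertices of G to the vertices of H such that for every edge {i,j} of G, f(i) ≠ f(j) and {f(i), f(j)} is an edge of H (in particular such an f exists whenever H is obtained from G by a sequence of identifications of non-adjacent vertices). If G has a Nullstellensatz certificate for non-3-colorability of degree d, then H has a Nullstellensatz certificate for non-3-colorability of degree at most d, obtained by the variable substitution x_i ↦ x_{f(i)}. Consequently, if every certificate for H has degree at least k, then every certificate for G has degree at least k. -/
open Finset MvPolynomial

/-- Let `f` be a graph homomorphism from `G` to `H` (for every edge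
`{i,j}` of `G`, `f i ≠ f j` and `{f i, f j}` is an edge of `H`). If `G` has a
Nullstellensatz certificate for non-3-colorability of degree `d`, then `H` has one of
degree at most `d`.  Consequently, if every certificate for `H` has degree at least `k`,
then every certificate for `G` has degree at least `k`. -/
theorem certificate_transfers_along_homomorphism (m n : ℕ)
    (G : SimpleGraph (Fin m)) (H : SimpleGraph (Fin n))
    [DecidableRel G.Adj] [DecidableRel H.Adj]
    (f : Fin m → Fin n)
    (hf : ∀ i j : Fin m, G.Adj i j → f i ≠ f j ∧ H.Adj (f i) (f j)) :
    (∀ (P : Fin m → MvPolynomial (Fin m) ℂ)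
        (Pe : Fin m × Fin m → MvPolynomial (Fin m) ℂ),
        IsColorCert G P Pe →
        ∃ (P' : Fin n → MvPolynomial (Fin n) ℂ)
          (Pe' : Fin n × Fin n → MvPolynomial (Fin n) ℂ),
          IsColorCert H P' Pe' ∧ colorCertDeg H P' Pe' ≤ colorCertDeg G P Pe) ∧
    (∀ k : ℕ,
      (∀ (P' : Fin n → MvPolynomial (Fin n) ℂ)
          (Pe' : Fin n × Fin n → MvPolynomial (Fin n) ℂ),
          IsColorCert H P' Pe' → k ≤ colorCertDeg H P' Pe') →
      ∀ (P : Fin m → MvPolynomial (Fin m) ℂ)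
          (Pe : Fin m × Fin m → MvPolynomial (Fin m) ℂ),
          IsColorCert G P Pe → k ≤ colorCertDeg G P Pe) := by
  have main : ∀ (P : Fin m → MvPolynomial (Fin m) ℂ)
      (Pe : Fin m × Fin m → MvPolynomial (Fin m) ℂ),
      IsColorCert G P Pe →
      ∃ (P' : Fin n → MvPolynomial (Fin n) ℂ)
        (Pe' : Fin n × Fin n → MvPolynomial (Fin n) ℂ),
        IsColorCert H P' Pe' ∧ colorCertDeg H P' Pe' ≤ colorCertDeg G P Pe := by
    intro P Pe hcert
    -- the map on edges
    set g : Fin m × Fin m → Fin n × Fin n :=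
      fun p => if f p.1 ≤ f p.2 then (f p.1, f p.2) else (f p.2, f p.1) with hg
    have hmaps : ∀ p ∈ edgePairs G, g p ∈ edgePairs H := by
      intro p hp
      simp only [edgePairs, mem_filter, mem_univ, true_and] at hp ⊢
      obtain ⟨-, hadj⟩ := hp
      obtain ⟨hne, hH⟩ := hf p.1 p.2 hadj
      simp only [hg]
      rcases le_or_gt (f p.1) (f p.2) with h | h
      · simp only [if_pos h]
        exact ⟨lt_of_le_of_ne h hne, hH⟩
      · simp only [if_neg (not_le.mpr h)]
        exact ⟨h, hH.symm⟩
    refine ⟨fun j => ∑ i ∈ univ.filter (fun i => f i = j), rename f (P i),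
            fun q => ∑ p ∈ (edgePairs G).filter (fun p => g p = q), rename f (Pe p),
            ?_, ?_⟩
    · -- certificate identity
      have := congrArg (rename f) hcert
      simp only [map_one, map_add, map_sum, map_mul, map_sub, map_pow, rename_X] at this
      unfold IsColorCert
      refine this.trans ?_
      congr 1
      · rw [← Finset.sum_fiberwise univ f (fun i => rename f (P i) * (X (f i) ^ 3 - 1))]
        refine Finset.sum_congr rfl fun j _ => ?_
        rw [Finset.sum_mul]
        refine Finset.sum_congr rfl fun i hi => ?_
        rw [(mem_filter.mp hi).2]
      · rw [← Finset.sum_fiberwise_of_maps_to hmaps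
          (fun p => rename f (Pe p) * (X (f p.1) ^ 2 + X (f p.1) * X (f p.2) + X (f p.2) ^ 2))]
        refine Finset.sum_congr rfl fun q _ => ?_
        rw [Finset.sum_mul]
        refine Finset.sum_congr rfl fun p hp => ?_
        have hq : g p = q := (mem_filter.mp hp).2
        subst hq
        simp only [hg]
        rcases le_or_gt (f p.1) (f p.2) with h | h
        · simp [if_pos h]
        · simp only [if_neg (not_le.mpr h)]
          ring
    · -- degree bound
      unfold colorCertDeg
      refine max_le_max ?_ ?_
      · refine Finset.sup_le fun j _ => ?_
        refine le_trans (totalDegree_finset_sum _ _) (Finset.sup_le fun i hi => ?_)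
        exact le_trans (totalDegree_rename_le _ _) (Finset.le_sup (f := fun i => (P i).totalDegree) (mem_univ i))
      · refine Finset.sup_le fun q _ => ?_
        refine le_trans (totalDegree_finset_sum _ _) (Finset.sup_le fun p hp => ?_)
        exact le_trans (totalDegree_rename_le _ _)
          (Finset.le_sup (f := fun p => (Pe p).totalDegree) (mem_filter.mp hp).1)
  refine ⟨main, fun k hk P Pe hc => ?_⟩
  obtain ⟨P', Pe', hc', hd⟩ := main P Pe hc
  exact le_trans (hk P' Pe' hc') hd
end

section
/- Let G be a finite simple graph that contains as a subgraph either a complete graph K_n with n ≥ 4, or an odd wheel W_m (a cycle of odd length m ≥ 3 together with an additional hub vertex adjacent to every cycle vertex). Then G is not 3-colorable, G has a Nullstellensatz certificate for non-3-colorability of degree exactly four, and every Nullstellensatz certificate for non-3-colorability of G has degree at least four; hence the minimum degree of a Nullstellensatz certificate for non-3-colorability of G is exactly four. -/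
open Finset MvPolynomial

section MemDeg
variable {n : ℕ} (G : SimpleGraph (Fin n)) [DecidableRel G.Adj]

def MemDeg (d : ℕ) (g : MvPolynomial (Fin n) ℂ) : Prop :=
  ∃ (P : Fin n → MvPolynomial (Fin n) ℂ) (Pe : Fin n × Fin n → MvPolynomial (Fin n) ℂ),
    (∀ i, (P i).totalDegree ≤ d) ∧ (∀ p, (Pe p).totalDegree ≤ d) ∧
    g = (∑ i : Fin n, P i * (X i ^ 3 - 1)) +
      ∑ p ∈ edgePairs G, Pe p * (X p.1 ^ 2 + X p.1 * X p.2 + X p.2 ^ 2)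

variable {G}

lemma memDeg_congr {d g g'} (h : MemDeg G d g) (e : g = g') : MemDeg G d g' := e ▸ h

lemma memDeg_mono {d d' g} (hdd : d ≤ d') (h : MemDeg G d g) : MemDeg G d' g := by
  obtain ⟨P, Pe, h1, h2, h3⟩ := h
  exact ⟨P, Pe, fun i => (h1 i).trans hdd, fun p => (h2 p).trans hdd, h3⟩

lemma memDeg_add {d g g'} (h : MemDeg G d g) (h' : MemDeg G d g') : MemDeg G d (g + g') := by
  obtain ⟨P, Pe, h1, h2, h3⟩ := h
  obtain ⟨P', Pe', h1', h2', h3'⟩ := h'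
  refine ⟨fun i => P i + P' i, fun p => Pe p + Pe' p, fun i => ?_, fun p => ?_, ?_⟩
  · exact (totalDegree_add _ _).trans (max_le (h1 i) (h1' i))
  · exact (totalDegree_add _ _).trans (max_le (h2 p) (h2' p))
  · rw [h3, h3']
    simp only [add_mul, Finset.sum_add_distrib]
    ring

lemma memDeg_mul {d e d' g} (q : MvPolynomial (Fin n) ℂ) (hq : q.totalDegree ≤ e)
    (h : MemDeg G d g) (hed : e + d ≤ d') : MemDeg G d' (q * g) := by
  obtain ⟨P, Pe, h1, h2, h3⟩ := h
  refine ⟨fun i => q * P i, fun p => q * Pe p, fun i => ?_, fun p => ?_, ?_⟩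
  · exact (totalDegree_mul _ _).trans (le_trans (add_le_add hq (h1 i)) hed)
  · exact (totalDegree_mul _ _).trans (le_trans (add_le_add hq (h2 p)) hed)
  · rw [h3, mul_add, Finset.mul_sum, Finset.mul_sum]
    simp only [mul_assoc]

lemma memDeg_Cmul {d g} (c : ℂ) (h : MemDeg G d g) : MemDeg G d (C c * g) :=
  memDeg_mul (e := 0) (C c) (by simp) h (by simp)

lemma memDeg_neg {d g} (h : MemDeg G d g) : MemDeg G d (-g) :=
  memDeg_congr (memDeg_Cmul (-1) h) (by rw [map_neg, map_one]; ring)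

lemma memDeg_sub {d g g'} (h : MemDeg G d g) (h' : MemDeg G d g') : MemDeg G d (g - g') := by
  simpa [sub_eq_add_neg] using memDeg_add h (memDeg_neg h')

lemma memDeg_zero {d} : MemDeg G d 0 := ⟨0, 0, by simp, by simp, by simp⟩

lemma memDeg_sum {d} {ι : Type*} (s : Finset ι) (f : ι → MvPolynomial (Fin n) ℂ)
    (h : ∀ k ∈ s, MemDeg G d (f k)) : MemDeg G d (∑ k ∈ s, f k) := by
  classical
  induction s using Finset.cons_induction with
  | empty => simpa using memDeg_zero
  | cons a s ha ih =>
    rw [Finset.sum_cons]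
    exact memDeg_add (h a (by simp)) (ih fun k hk => h k (by simp [hk]))

lemma memDeg_vertex (i : Fin n) : MemDeg G 0 (X i ^ 3 - 1) := by
  classical
  refine ⟨fun j => if j = i then 1 else 0, 0, fun j => ?_, by simp, ?_⟩
  · by_cases hji : j = i <;> simp [hji]
  · simp only [ite_mul, one_mul, zero_mul, Finset.sum_ite_eq', Finset.mem_univ, if_true]
    simp

lemma memDeg_edge {i j : Fin n} (hadj : G.Adj i j) :
    MemDeg G 0 (X i ^ 2 + X i * X j + X j ^ 2) := by
  classical
  have hne : i ≠ j := hadj.ne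
  by_cases hlt : i < j
  · have hmem : (i, j) ∈ edgePairs G := by simp [edgePairs, hlt, hadj]
    refine ⟨0, fun p => if p = (i, j) then 1 else 0, by simp, fun p => ?_, ?_⟩
    · by_cases hp : p = (i, j) <;> simp [hp]
    · simp only [ite_mul, one_mul, zero_mul, Finset.sum_ite_eq', hmem, if_true]
      simp
  · have hlt' : j < i := lt_of_le_of_ne (not_lt.mp hlt) hne.symm
    have hmem : (j, i) ∈ edgePairs G := by simp [edgePairs, hlt', hadj.symm]
    refine ⟨0, fun p => if p = (j, i) then 1 else 0, by simp, fun p => ?_, ?_⟩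
    · by_cases hp : p = (j, i) <;> simp [hp]
    · simp only [ite_mul, one_mul, zero_mul, Finset.sum_ite_eq', hmem, if_true]
      simp
      ring

end MemDeg

section Triangle
variable {n : ℕ} {G : SimpleGraph (Fin n)} [DecidableRel G.Adj]

lemma degX2 (i : Fin n) : (X i : MvPolynomial (Fin n) ℂ).totalDegree ≤ 2 := by
  simp [totalDegree_X]

lemma degCX (c : ℂ) (i : Fin n) : (C c * X i : MvPolynomial (Fin n) ℂ).totalDegree ≤ 2 := by
  refine (totalDegree_mul _ _).trans ?_
  simp [totalDegree_X, totalDegree_C]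

lemma degCXX (c : ℂ) (i j : Fin n) :
    (C c * (X i * X j) : MvPolynomial (Fin n) ℂ).totalDegree ≤ 2 := by
  refine (totalDegree_mul _ _).trans ?_
  have : (X i * X j : MvPolynomial (Fin n) ℂ).totalDegree ≤ 2 := by
    refine (totalDegree_mul _ _).trans ?_
    simp [totalDegree_X]
  simpa [totalDegree_C] using this

lemma deg_add2 {p q : MvPolynomial (Fin n) ℂ} (hp : p.totalDegree ≤ 2) (hq : q.totalDegree ≤ 2) :
    (p + q).totalDegree ≤ 2 :=
  (totalDegree_add _ _).trans (max_le hp hq)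

/-- Triangle lemma: `X a + X b + X c` is in the ideal with coefficient degree ≤ 2. -/
lemma memDeg_triangle {a b c : Fin n} (hab : G.Adj a b) (hac : G.Adj a c) (hbc : G.Adj b c) :
    MemDeg G 2 (X a + X b + X c) := by
  -- E = 3*(X a + X b + X c)
  have t1 : MemDeg G 2 ((X c) * (X b ^ 3 - 1)) :=
    memDeg_mul (X c) (degX2 c) (memDeg_vertex b) (by norm_num)
  have t2 : MemDeg G 2 ((C (-4 : ℂ) * X c + (C (-3 : ℂ) * X b + C (-3 : ℂ) * X a)) *
      (X c ^ 3 - 1)) :=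
    memDeg_mul _ (deg_add2 (degCX _ _) (deg_add2 (degCX _ _) (degCX _ _)))
      (memDeg_vertex c) (by norm_num)
  have t3 : MemDeg G 2 ((C (-2 : ℂ) * (X c * X c) + C (-1 : ℂ) * (X b * X c)) *
      (X a ^ 2 + X a * X b + X b ^ 2)) :=
    memDeg_mul _ (deg_add2 (degCXX _ _ _) (degCXX _ _ _)) (memDeg_edge hab) (by norm_num)
  have t4 : MemDeg G 2 ((C (2 : ℂ) * (X c * X c) + C (1 : ℂ) * (X b * X c)) *
      (X a ^ 2 + X a * X c + X c ^ 2)) :=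
    memDeg_mul _ (deg_add2 (degCXX _ _ _) (degCXX _ _ _)) (memDeg_edge hac) (by norm_num)
  have t5 : MemDeg G 2 ((C (2 : ℂ) * (X c * X c) + C (1 : ℂ) * (X a * X c)) *
      (X b ^ 2 + X b * X c + X c ^ 2)) :=
    memDeg_mul _ (deg_add2 (degCXX _ _ _) (degCXX _ _ _)) (memDeg_edge hbc) (by norm_num)
  have hE := memDeg_add t1 (memDeg_add t2 (memDeg_add t3 (memDeg_add t4 t5)))
  have hfin := memDeg_Cmul (1/3 : ℂ) hE
  refine memDeg_congr hfin ?_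
  have hC : ∀ c : ℂ, (C c : MvPolynomial (Fin n) ℂ) = (c : ℂ) • 1 := by
    intro c; rw [smul_eq_C_mul, mul_one]
  have e1 : ((X c) * (X b ^ 3 - 1) + ((C (-4 : ℂ) * X c + (C (-3 : ℂ) * X b + C (-3 : ℂ) * X a)) *
      (X c ^ 3 - 1) + ((C (-2 : ℂ) * (X c * X c) + C (-1 : ℂ) * (X b * X c)) *
      (X a ^ 2 + X a * X b + X b ^ 2) + ((C (2 : ℂ) * (X c * X c) + C (1 : ℂ) * (X b * X c)) *
      (X a ^ 2 + X a * X c + X c ^ 2) + (C (2 : ℂ) * (X c * X c) + C (1 : ℂ) * (X a * X c)) *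
      (X b ^ 2 + X b * X c + X c ^ 2))))) = 3 * (X a + X b + X c) := by
    have h2 : (C (2 : ℂ) : MvPolynomial (Fin n) ℂ) = 2 := map_ofNat _ 2
    have h1 : (C (1 : ℂ) : MvPolynomial (Fin n) ℂ) = 1 := map_one _
    have hm2 : (C (-2 : ℂ) : MvPolynomial (Fin n) ℂ) = -2 := by
      rw [map_neg, h2]
    have hm1 : (C (-1 : ℂ) : MvPolynomial (Fin n) ℂ) = -1 := by
      rw [map_neg, h1]
    have hm3 : (C (-3 : ℂ) : MvPolynomial (Fin n) ℂ) = -3 := by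
      rw [show (-3 : ℂ) = -(3 : ℂ) by norm_num, map_neg, map_ofNat]
    have hm4 : (C (-4 : ℂ) : MvPolynomial (Fin n) ℂ) = -4 := by
      rw [show (-4 : ℂ) = -(4 : ℂ) by norm_num, map_neg, map_ofNat]
    rw [h2, h1, hm2, hm1, hm3, hm4]
    ring
  rw [e1, ← mul_assoc, show (3 : MvPolynomial (Fin n) ℂ) = C (3 : ℂ) from (map_ofNat _ 3).symm,
    ← map_mul]
  norm_num

end Triangle

section Wheel
variable {n : ℕ} {G : SimpleGraph (Fin n)} [DecidableRel G.Adj]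

lemma telescope {R : Type*} [CommRing R] (g : ℕ → R) (hh : R) (k : ℕ) :
    ∑ t ∈ Finset.range (2 * k + 2), (-1 : R) ^ (t + 1) * (g t + g (t + 1) + hh) =
      g (2 * k + 2) - g 0 := by
  induction k with
  | zero => simp [Finset.sum_range_succ]; ring
  | succ k ih =>
    have h1 : 2 * (k + 1) + 2 = (2 * k + 2) + 1 + 1 := by ring
    rw [h1, Finset.sum_range_succ, Finset.sum_range_succ, ih]
    have he : (-1 : R) ^ (2 * k + 2 + 1) = -1 := Odd.neg_one_pow ⟨k + 1, by ring⟩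
    have ho : (-1 : R) ^ (2 * k + 2 + 1 + 1) = 1 := Even.neg_one_pow ⟨k + 2, by ring⟩
    rw [he, ho]
    have : 2 * k + 2 + 1 + 1 = 2 * (k + 1) + 2 := by ring
    rw [this]
    ring_nf

open Fin.NatCast in
lemma wheel_memDeg (L : ℕ) [NeZero L] (hL3 : 3 ≤ L) (hodd : Odd L) (f : Fin L → Fin n) (hub : Fin n)
    (hcyc : ∀ t : Fin L, G.Adj (f t) (f (t + 1)))
    (hhub : ∀ t : Fin L, G.Adj hub (f t)) : MemDeg G 4 1 := by
  set F : ℕ → Fin n := fun t => f ((t : ℕ) : Fin L) with hF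
  have hFsucc : ∀ t : ℕ, F (t + 1) = f (((t : ℕ) : Fin L) + 1) := by
    intro t; simp [hF, Nat.cast_add, Nat.cast_one]
  have hs : ∀ t : ℕ, MemDeg G 2 (X (F t) + X (F (t + 1)) + X hub) := by
    intro t
    have h1 : G.Adj (F t) (F (t + 1)) := by rw [hFsucc]; exact hcyc _
    have h2 : G.Adj (F t) hub := (hhub _).symm
    have h3 : G.Adj (F (t + 1)) hub := by rw [hFsucc]; exact (hhub _).symm
    exact memDeg_triangle h1 h2 h3
  obtain ⟨k, hk⟩ : ∃ k, L = 2 * k + 1 := by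
    obtain ⟨k, hk⟩ := hodd; exact ⟨k, by omega⟩
  -- D = X (F 1) - X (F 0)
  have hD : MemDeg G 2 (X (F 1) - X (F 0)) := by
    have hsum : MemDeg G 2
        (∑ t ∈ Finset.range (2 * k + 2), C ((-1 : ℂ) ^ (t + 1)) * (X (F t) + X (F (t + 1)) + X hub)) :=
      memDeg_sum _ _ (fun t _ => memDeg_Cmul _ (hs t))
    refine memDeg_congr hsum ?_
    have hCpow : ∀ t : ℕ, (C ((-1 : ℂ) ^ (t + 1)) : MvPolynomial (Fin n) ℂ) =
        (-1 : MvPolynomial (Fin n) ℂ) ^ (t + 1) := by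
      intro t; rw [map_pow, map_neg, map_one]
    calc ∑ t ∈ Finset.range (2 * k + 2), C ((-1 : ℂ) ^ (t + 1)) * (X (F t) + X (F (t + 1)) + X hub)
        = ∑ t ∈ Finset.range (2 * k + 2),
            (-1 : MvPolynomial (Fin n) ℂ) ^ (t + 1) * (X (F t) + X (F (t + 1)) + X hub) := by
          refine Finset.sum_congr rfl fun t _ => by rw [hCpow]
      _ = X (F (2 * k + 2)) - X (F 0) := telescope (fun t => X (F t)) (X hub) k
      _ = X (F 1) - X (F 0) := by
          have : F (2 * k + 2) = F 1 := by
            have h2 : ((2 * k + 2 : ℕ) : Fin L) = ((1 : ℕ) : Fin L) := by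
              have : (2 * k + 2 : ℕ) = L + 1 := by omega
              rw [this, Nat.cast_add, Fin.natCast_self, zero_add]
            simp [hF, h2]
          rw [this]
  -- T = 2 * X (F 0) + X hub
  have hT : MemDeg G 2 (2 * X (F 0) + X hub) := by
    have := memDeg_sub (hs 0) hD
    refine memDeg_congr this (by ring)
  -- A = 3 * X (F 0) ^ 2
  have hQ : MemDeg G 3 (X hub ^ 2 + X hub * X (F 0) + X (F 0) ^ 2) :=
    memDeg_mono (by norm_num) (memDeg_edge (hhub _))
  have hdegsub : (X (F 0) - X hub : MvPolynomial (Fin n) ℂ).totalDegree ≤ 1 := by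
    rw [sub_eq_add_neg]
    refine (totalDegree_add _ _).trans (max_le ?_ ?_)
    · simp [totalDegree_X]
    · rw [totalDegree_neg]; simp [totalDegree_X]
  have hmul : MemDeg G 3 ((X (F 0) - X hub) * (2 * X (F 0) + X hub)) :=
    memDeg_mul _ hdegsub hT (by norm_num)
  have hA : MemDeg G 3 (3 * X (F 0) ^ 2) := by
    refine memDeg_congr (memDeg_add hQ hmul) (by ring)
  -- final
  have hx0 : MemDeg G 4 (X (F 0) * (3 * X (F 0) ^ 2)) :=
    memDeg_mul (e := 1) _ (by simp [totalDegree_X]) hA (by norm_num)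
  have hV : MemDeg G 4 (C (3 : ℂ) * (X (F 0) ^ 3 - 1)) :=
    memDeg_mono (by norm_num) (memDeg_Cmul _ (memDeg_vertex (F 0)))
  have hV' : MemDeg G 4 ((3 : MvPolynomial (Fin n) ℂ) * (X (F 0) ^ 3 - 1)) := by
    refine memDeg_congr hV ?_
    rw [map_ofNat]
  have hE : MemDeg G 4 (X (F 0) * (3 * X (F 0) ^ 2) - 3 * (X (F 0) ^ 3 - 1)) :=
    memDeg_sub hx0 hV'
  have h3 : MemDeg G 4 (C (1/3 : ℂ) * (X (F 0) * (3 * X (F 0) ^ 2) - 3 * (X (F 0) ^ 3 - 1))) :=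
    memDeg_Cmul _ hE
  refine memDeg_congr h3 ?_
  have : (X (F 0) * (3 * X (F 0) ^ 2) - 3 * (X (F 0) ^ 3 - 1) : MvPolynomial (Fin n) ℂ) = 3 := by
    ring
  rw [this, show (3 : MvPolynomial (Fin n) ℂ) = C (3 : ℂ) from (map_ofNat _ 3).symm, ← map_mul]
  norm_num

end Wheel

section LowerBound
variable {n : ℕ}

def cnt (k : ℕ) (α : Fin n →₀ ℕ) : ℕ := (Finset.univ.filter fun v => α v % 3 = k).card

noncomputable def wfun (α : Fin n →₀ ℕ) : ℂ :=
  if cnt 1 α = 0 ∧ cnt 2 α = 0 then 1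
  else if cnt 1 α = 1 ∧ cnt 2 α = 1 then -(1/2)
  else if cnt 1 α = 3 ∧ cnt 2 α = 0 then 1 else 0

lemma cnt_congr (k : ℕ) {α β : Fin n →₀ ℕ} (h : ∀ v, α v % 3 = β v % 3) :
    cnt k α = cnt k β := by
  unfold cnt
  congr 1
  exact Finset.filter_congr fun v _ => by rw [h v]

lemma wfun_congr {α β : Fin n →₀ ℕ} (h : ∀ v, α v % 3 = β v % 3) : wfun α = wfun β := by
  unfold wfun
  rw [cnt_congr 1 h, cnt_congr 2 h]

lemma wfun_add3 (α : Fin n →₀ ℕ) (i : Fin n) :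
    wfun (α + Finsupp.single i 3) = wfun α := by
  refine wfun_congr fun v => ?_
  rw [Finsupp.add_apply, Finsupp.single_apply]
  by_cases hvi : i = v
  · simp [hvi, Nat.add_mod_right]
  · simp [hvi]

def cnt2 (k : ℕ) (i j : Fin n) (α : Fin n →₀ ℕ) : ℕ :=
  (((Finset.univ.erase i).erase j).filter fun v => α v % 3 = k).card

lemma cnt_split (k : ℕ) (i j : Fin n) (hij : i ≠ j) (α : Fin n →₀ ℕ) :
    cnt k α = cnt2 k i j α +
      ((if α i % 3 = k then 1 else 0) + (if α j % 3 = k then 1 else 0)) := by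
  unfold cnt cnt2
  rw [Finset.card_filter, Finset.card_filter]
  have hi : i ∈ (Finset.univ : Finset (Fin n)) := Finset.mem_univ i
  have hj : j ∈ (Finset.univ : Finset (Fin n)).erase i :=
    Finset.mem_erase.2 ⟨hij.symm, Finset.mem_univ j⟩
  rw [← Finset.add_sum_erase _ _ hi, ← Finset.add_sum_erase _ _ hj]
  ring

lemma cnt2_agree (k : ℕ) (i j : Fin n) {α β : Fin n →₀ ℕ}
    (h : ∀ v, v ≠ i → v ≠ j → α v = β v) : cnt2 k i j α = cnt2 k i j β := by
  unfold cnt2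
  congr 1
  refine Finset.filter_congr fun v hv => ?_
  rw [Finset.mem_erase, Finset.mem_erase] at hv
  rw [h v hv.2.1 hv.1]

lemma cnt2_sum_bound (i j : Fin n) (hij : i ≠ j) (α : Fin n →₀ ℕ) :
    cnt2 1 i j α + 2 * cnt2 2 i j α + α i + α j ≤ ∑ v, α v := by
  classical
  set s := (Finset.univ.erase i).erase j with hs
  have h1 : cnt2 1 i j α • 1 ≤ ∑ v ∈ s.filter (fun v => α v % 3 = 1), α v := by
    refine Finset.card_nsmul_le_sum _ _ _ fun v hv => ?_
    have := (Finset.mem_filter.1 hv).2; omega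
  have h2 : cnt2 2 i j α • 2 ≤ ∑ v ∈ s.filter (fun v => α v % 3 = 2), α v := by
    refine Finset.card_nsmul_le_sum _ _ _ fun v hv => ?_
    have := (Finset.mem_filter.1 hv).2; omega
  have hdisj : Disjoint (s.filter (fun v => α v % 3 = 1)) (s.filter (fun v => α v % 3 = 2)) := by
    rw [Finset.disjoint_left]
    intro v hv1 hv2
    have e1 := (Finset.mem_filter.1 hv1).2
    have e2 := (Finset.mem_filter.1 hv2).2
    omega
  have hsub : s.filter (fun v => α v % 3 = 1) ∪ s.filter (fun v => α v % 3 = 2) ⊆ s :=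
    Finset.union_subset (Finset.filter_subset _ _) (Finset.filter_subset _ _)
  have h3 : ∑ v ∈ s.filter (fun v => α v % 3 = 1), α v +
      ∑ v ∈ s.filter (fun v => α v % 3 = 2), α v ≤ ∑ v ∈ s, α v := by
    rw [← Finset.sum_union hdisj]
    exact Finset.sum_le_sum_of_subset hsub
  have h4 : α i + (α j + ∑ v ∈ s, α v) = ∑ v, α v := by
    have hi : i ∈ (Finset.univ : Finset (Fin n)) := Finset.mem_univ i
    have hj : j ∈ (Finset.univ : Finset (Fin n)).erase i :=
      Finset.mem_erase.2 ⟨hij.symm, Finset.mem_univ j⟩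
    rw [Finset.add_sum_erase _ _ hj, Finset.add_sum_erase _ _ hi]
  simp only [smul_eq_mul] at h1 h2
  omega

lemma wfun_edge (i j : Fin n) (hij : i ≠ j) (α : Fin n →₀ ℕ) (hdeg : (∑ v, α v) ≤ 3) :
    wfun (α + Finsupp.single i 2) + wfun (α + Finsupp.single i 1 + Finsupp.single j 1) +
      wfun (α + Finsupp.single j 2) = 0 := by
  classical
  set β1 := α + Finsupp.single i 2 with hβ1
  set β2 := α + Finsupp.single i 1 + Finsupp.single j 1 with hβ2
  set β3 := α + Finsupp.single j 2 with hβ3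
  have hb1i : β1 i = α i + 2 := by simp [hβ1]
  have hb1j : β1 j = α j := by simp [hβ1, Finsupp.single_apply, hij]
  have hb2i : β2 i = α i + 1 := by simp [hβ2, Finsupp.single_apply, hij.symm]
  have hb2j : β2 j = α j + 1 := by simp [hβ2, Finsupp.single_apply, hij]
  have hb3i : β3 i = α i := by simp [hβ3, Finsupp.single_apply, hij.symm]
  have hb3j : β3 j = α j + 2 := by simp [hβ3]
  have hc1 : ∀ k, cnt2 k i j β1 = cnt2 k i j α := fun k =>
    cnt2_agree k i j fun v hvi _ => by simp [hβ1, Finsupp.single_apply, Ne.symm hvi]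
  have hc2 : ∀ k, cnt2 k i j β2 = cnt2 k i j α := fun k =>
    cnt2_agree k i j fun v hvi hvj => by
      simp [hβ2, Finsupp.single_apply, Ne.symm hvi, Ne.symm hvj]
  have hc3 : ∀ k, cnt2 k i j β3 = cnt2 k i j α := fun k =>
    cnt2_agree k i j fun v _ hvj => by simp [hβ3, Finsupp.single_apply, Ne.symm hvj]
  have hbound : α i % 3 + α j % 3 + cnt2 1 i j α + 2 * cnt2 2 i j α ≤ 3 := by
    have h1 := cnt2_sum_bound i j hij α
    have h2 : α i % 3 ≤ α i := Nat.mod_le _ _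
    have h3 : α j % 3 ≤ α j := Nat.mod_le _ _
    omega
  have hri : α i % 3 < 3 := Nat.mod_lt _ (by norm_num)
  have hrj : α j % 3 < 3 := Nat.mod_lt _ (by norm_num)
  unfold wfun
  rw [cnt_split 1 i j hij β1, cnt_split 2 i j hij β1, cnt_split 1 i j hij β2,
    cnt_split 2 i j hij β2, cnt_split 1 i j hij β3, cnt_split 2 i j hij β3,
    hc1 1, hc1 2, hc2 1, hc2 2, hc3 1, hc3 2, hb1i, hb1j, hb2i, hb2j, hb3i, hb3j,
    Nat.add_mod (α i) 2 3, Nat.add_mod (α i) 1 3, Nat.add_mod (α j) 1 3, Nat.add_mod (α j) 2 3]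
  have hA1 : cnt2 1 i j α ≤ 3 := by omega
  have hA2 : cnt2 2 i j α ≤ 1 := by omega
  generalize hri' : α i % 3 = ri at *
  generalize hrj' : α j % 3 = rj at *
  generalize hA1' : cnt2 1 i j α = A1 at *
  generalize hA2' : cnt2 2 i j α = A2 at *
  interval_cases ri <;> interval_cases rj <;> interval_cases A1 <;> interval_cases A2 <;>
    first
      | omega
      | norm_num

noncomputable def Lfun : MvPolynomial (Fin n) ℂ →+ ℂ :=
  (Finsupp.liftAddHom (fun α : Fin n →₀ ℕ => AddMonoidHom.mulRight (wfun α)) :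
    ((Fin n →₀ ℕ) →₀ ℂ) →+ ℂ).comp AddMonoidAlgebra.coeffAddEquiv.toAddMonoidHom

lemma Lfun_monomial (α : Fin n →₀ ℕ) (c : ℂ) : Lfun (monomial α c) = c * wfun α := by
  have h : (monomial α c : MvPolynomial (Fin n) ℂ) = AddMonoidAlgebra.single α c :=
    (MvPolynomial.single_eq_monomial α c).symm
  rw [h]
  exact Finsupp.liftAddHom_apply_single _ α c

lemma Lfun_one : Lfun (1 : MvPolynomial (Fin n) ℂ) = 1 := by
  have h0 : (1 : MvPolynomial (Fin n) ℂ) = monomial 0 1 := by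
    rw [← C_apply, map_one]
  rw [h0, Lfun_monomial, one_mul]
  unfold wfun
  have h1 : cnt 1 (0 : Fin n →₀ ℕ) = 0 := by simp [cnt]
  have h2 : cnt 2 (0 : Fin n →₀ ℕ) = 0 := by simp [cnt]
  simp [h1, h2]

end LowerBound

section Main
variable {n : ℕ} {G : SimpleGraph (Fin n)} [DecidableRel G.Adj]

lemma Lfun_mul_vertex (p : MvPolynomial (Fin n) ℂ) (i : Fin n) :
    Lfun (p * (X i ^ 3 - 1)) = 0 := by
  have hexp : p * (X i ^ 3 - 1) =
      ∑ α ∈ p.support, ((monomial (α + Finsupp.single i 3)) (coeff α p) -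
        (monomial α) (coeff α p)) := by
    conv_lhs => rw [as_sum p]
    rw [Finset.sum_mul]
    refine Finset.sum_congr rfl fun α _ => ?_
    rw [mul_sub, mul_one, X_pow_eq_monomial, monomial_mul, mul_one]
  rw [hexp, map_sum]
  refine Finset.sum_eq_zero fun α _ => ?_
  rw [map_sub, Lfun_monomial, Lfun_monomial, wfun_add3]
  ring

lemma Lfun_mul_edge (p : MvPolynomial (Fin n) ℂ) (i j : Fin n) (hij : i ≠ j)
    (hdeg : p.totalDegree ≤ 3) :
    Lfun (p * (X i ^ 2 + X i * X j + X j ^ 2)) = 0 := by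
  have hXX : (X i * X j : MvPolynomial (Fin n) ℂ) =
      monomial (Finsupp.single i 1 + Finsupp.single j 1) 1 := by
    rw [← pow_one (X i), ← pow_one (X j), X_pow_eq_monomial, X_pow_eq_monomial,
      monomial_mul, mul_one]
  have hexp : p * (X i ^ 2 + X i * X j + X j ^ 2) =
      ∑ α ∈ p.support, ((monomial (α + Finsupp.single i 2)) (coeff α p) +
        ((monomial (α + Finsupp.single i 1 + Finsupp.single j 1)) (coeff α p) +
          (monomial (α + Finsupp.single j 2)) (coeff α p))) := by
    conv_lhs => rw [as_sum p]
    rw [Finset.sum_mul]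
    refine Finset.sum_congr rfl fun α _ => ?_
    rw [mul_add, mul_add, X_pow_eq_monomial, X_pow_eq_monomial, hXX,
      monomial_mul, monomial_mul, monomial_mul, mul_one, add_assoc,
      ← add_assoc α (Finsupp.single i 1) (Finsupp.single j 1)]
  rw [hexp, map_sum]
  refine Finset.sum_eq_zero fun α hα => ?_
  rw [map_add, map_add, Lfun_monomial, Lfun_monomial, Lfun_monomial]
  have hsum : (∑ v, α v) ≤ 3 := by
    have h1 := MvPolynomial.le_totalDegree hα
    have h2 : (α.sum fun _ e => e) = ∑ v, α v := Finsupp.sum_fintype _ _ (fun _ => rfl)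
    omega
  have := wfun_edge i j hij α hsum
  rw [← mul_add, ← mul_add, ← add_assoc, this, mul_zero]

theorem cert_deg_ge (P : Fin n → MvPolynomial (Fin n) ℂ)
    (Pe : Fin n × Fin n → MvPolynomial (Fin n) ℂ)
    (hc : IsColorCert G P Pe) : 4 ≤ colorCertDeg G P Pe := by
  by_contra hlt
  push_neg at hlt
  have hP : ∀ i, (P i).totalDegree ≤ 3 := by
    intro i
    have h1 : (P i).totalDegree ≤ colorCertDeg G P Pe := by
      unfold colorCertDeg
      exact le_trans (Finset.le_sup (f := fun i => (P i).totalDegree) (Finset.mem_univ i)) (le_max_left _ _)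
    omega
  have hPe : ∀ p ∈ edgePairs G, (Pe p).totalDegree ≤ 3 := by
    intro p hp
    have h1 : (Pe p).totalDegree ≤ colorCertDeg G P Pe := by
      unfold colorCertDeg
      exact le_trans (Finset.le_sup (f := fun p => (Pe p).totalDegree) hp) (le_max_right _ _)
    omega
  have key := congrArg Lfun hc
  rw [Lfun_one, map_add, map_sum, map_sum] at key
  rw [Finset.sum_eq_zero (fun i _ => Lfun_mul_vertex (P i) i)] at key
  rw [Finset.sum_eq_zero (fun p hp => ?_), add_zero] at key
  · exact one_ne_zero key
  · have hmem := Finset.mem_filter.1 hp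
    exact Lfun_mul_edge (Pe p) p.1 p.2 (ne_of_lt hmem.2.1) (hPe p hp)

lemma not_colorable_of_cert (P : Fin n → MvPolynomial (Fin n) ℂ)
    (Pe : Fin n × Fin n → MvPolynomial (Fin n) ℂ)
    (hc : IsColorCert G P Pe) : ¬ G.Colorable 3 := by
  rintro ⟨col⟩
  set ω : ℂ := Complex.exp (2 * Real.pi * Complex.I / 3) with hω
  have hprim : IsPrimitiveRoot ω 3 := by
    have := Complex.isPrimitiveRoot_exp 3 (by norm_num)
    simpa [hω] using this
  set z : Fin n → ℂ := fun v => ω ^ ((col v : Fin 3) : ℕ) with hz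
  have hz3 : ∀ v, z v ^ 3 = 1 := by
    intro v
    rw [hz]
    rw [← pow_mul, mul_comm, pow_mul, hprim.pow_eq_one, one_pow]
  have key := congrArg (aeval z) hc
  simp only [map_add, map_sum, map_mul, map_sub, map_pow, map_one, aeval_X] at key
  rw [Finset.sum_eq_zero (fun i _ => by rw [hz3, sub_self, mul_zero])] at key
  rw [Finset.sum_eq_zero (fun p hp => ?_), add_zero] at key
  · exact one_ne_zero key
  · have hmem := Finset.mem_filter.1 hp
    have hadj : G.Adj p.1 p.2 := hmem.2.2
    have hne : z p.1 ≠ z p.2 := by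
      intro he
      have hcol : col p.1 ≠ col p.2 := col.valid hadj
      have h1 : ((col p.1 : Fin 3) : ℕ) = ((col p.2 : Fin 3) : ℕ) :=
        hprim.pow_inj (Fin.is_lt _) (Fin.is_lt _) he
      exact hcol (Fin.val_injective h1)
    have hq : z p.1 ^ 2 + z p.1 * z p.2 + z p.2 ^ 2 = 0 := by
      have hfact : (z p.1 - z p.2) * (z p.1 ^ 2 + z p.1 * z p.2 + z p.2 ^ 2) =
          z p.1 ^ 3 - z p.2 ^ 3 := by ring
      have h0 : (z p.1 - z p.2) * (z p.1 ^ 2 + z p.1 * z p.2 + z p.2 ^ 2) = 0 := by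
        rw [hfact, hz3, hz3, sub_self]
      rcases mul_eq_zero.mp h0 with h | h
      · exact absurd (sub_eq_zero.mp h) hne
      · exact h
    rw [hq, mul_zero]

end Main

section Assemble
variable {n : ℕ} {G : SimpleGraph (Fin n)} [DecidableRel G.Adj]

lemma memDeg_one_of_hyp
    (h : (∃ S : Finset (Fin n), 4 ≤ S.card ∧ ∀ i ∈ S, ∀ j ∈ S, i ≠ j → G.Adj i j) ∨
      (∃ m : ℕ, Odd (m + 3) ∧
        ∃ (f : Fin (m + 3) → Fin n) (hub : Fin n),
          Function.Injective f ∧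
          (∀ t : Fin (m + 3), G.Adj (f t) (f (t + 1))) ∧
          (∀ t : Fin (m + 3), hub ≠ f t) ∧
          (∀ t : Fin (m + 3), G.Adj hub (f t)))) : MemDeg G 4 1 := by
  rcases h with ⟨S, hcard, hadj⟩ | ⟨m, hodd, f, hub, _, hcyc, _, hhub⟩
  · obtain ⟨a, ha⟩ := Finset.card_pos.mp (show 0 < S.card by omega)
    obtain ⟨b, hb⟩ := Finset.card_pos.mp (show 0 < (S.erase a).card by
      rw [Finset.card_erase_of_mem ha]; omega)
    obtain ⟨c, hc⟩ := Finset.card_pos.mp (show 0 < ((S.erase a).erase b).card by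
      rw [Finset.card_erase_of_mem hb, Finset.card_erase_of_mem ha]; omega)
    obtain ⟨d, hd⟩ := Finset.card_pos.mp (show 0 < (((S.erase a).erase b).erase c).card by
      rw [Finset.card_erase_of_mem hc, Finset.card_erase_of_mem hb,
        Finset.card_erase_of_mem ha]; omega)
    have hbS : b ∈ S := Finset.mem_of_mem_erase hb
    have hcS : c ∈ S := Finset.mem_of_mem_erase (Finset.mem_of_mem_erase hc)
    have hdS : d ∈ S := Finset.mem_of_mem_erase (Finset.mem_of_mem_erase
      (Finset.mem_of_mem_erase hd))
    have hba : b ≠ a := (Finset.mem_erase.1 hb).1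
    have hcb : c ≠ b := (Finset.mem_erase.1 hc).1
    have hca : c ≠ a := (Finset.mem_erase.1 (Finset.mem_of_mem_erase hc)).1
    have hdc : d ≠ c := (Finset.mem_erase.1 hd).1
    have hdb : d ≠ b := (Finset.mem_erase.1 (Finset.mem_of_mem_erase hd)).1
    have hda : d ≠ a := (Finset.mem_erase.1 (Finset.mem_of_mem_erase
      (Finset.mem_of_mem_erase hd))).1
    refine wheel_memDeg 3 (by norm_num) (⟨1, by norm_num⟩) ![a, b, c] d ?_ ?_
    · intro t
      fin_cases t <;> simp
      · exact hadj a ha b hbS hba.symm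
      · exact hadj b hbS c hcS hcb.symm
      · exact hadj c hcS a ha hca
    · intro t
      fin_cases t <;> simp
      · exact hadj d hdS a ha hda
      · exact hadj d hdS b hbS hdb
      · exact hadj d hdS c hcS hdc
  · exact wheel_memDeg (m + 3) (by omega) hodd f hub hcyc hhub

end Assemble


/-- If a finite simple graph `G` contains as a subgraph either a complete
graph on at least 4 vertices (a clique of size ≥ 4) or an odd wheel (an odd cycle of
length `≥ 3` together with a hub vertex adjacent to every cycle vertex), then `G` is not
3-colorable, `G` has a Nullstellensatz certificate for non-3-colorability of degree
exactly four, and every such certificate has degree at least four; hence the minimum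
certificate degree is exactly four. -/
theorem clique_or_oddWheel_certificate_degree_four (n : ℕ) (G : SimpleGraph (Fin n))
    [DecidableRel G.Adj]
    (h : (∃ S : Finset (Fin n), 4 ≤ S.card ∧ ∀ i ∈ S, ∀ j ∈ S, i ≠ j → G.Adj i j) ∨
      (∃ m : ℕ, Odd (m + 3) ∧
        ∃ (f : Fin (m + 3) → Fin n) (hub : Fin n),
          Function.Injective f ∧
          (∀ t : Fin (m + 3), G.Adj (f t) (f (t + 1))) ∧
          (∀ t : Fin (m + 3), hub ≠ f t) ∧
          (∀ t : Fin (m + 3), G.Adj hub (f t)))) :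
    ¬ G.Colorable 3 ∧
    (∃ (P : Fin n → MvPolynomial (Fin n) ℂ)
        (Pe : Fin n × Fin n → MvPolynomial (Fin n) ℂ),
        IsColorCert G P Pe ∧ colorCertDeg G P Pe = 4) ∧
    (∀ (P : Fin n → MvPolynomial (Fin n) ℂ)
        (Pe : Fin n × Fin n → MvPolynomial (Fin n) ℂ),
        IsColorCert G P Pe → 4 ≤ colorCertDeg G P Pe) := by
  obtain ⟨P, Pe, hP, hPe, heq⟩ := memDeg_one_of_hyp h
  have hcert : IsColorCert G P Pe := heq
  have hle : colorCertDeg G P Pe ≤ 4 := by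
    unfold colorCertDeg
    exact max_le (Finset.sup_le fun i _ => hP i) (Finset.sup_le fun p _ => hPe p)
  refine ⟨not_colorable_of_cert P Pe hcert, ⟨P, Pe, hcert, ?_⟩, fun P' Pe' h' => cert_deg_ge P' Pe' h'⟩
  exact le_antisymm hle (cert_deg_ge P Pe hcert)
end
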